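/- Let u : [0,∞) → ℝ be continuous with u(0) = x₀ ≥ 0. Define v(t) = sup_{0≤s≤t} max(-u(s), 0) and x(t) = u(t) + v(t). Then x(t) ≥ 0 for all t, v is nondecreasing with v(0) = 0, and v increases only when x = 0 (i.e., if v(t₂) > v(t₁) for t₁ < t₂, then x(s) = 0 for some s ∈ [t₁, t₂]). -/

import Mathlib

open Set

/-- Skorokhod reflection for a single queue: nonnegativity of the reflected
process, the regulator is zero at time zero, nondecreasing, and increases
only when the reflected process touches zero. -/
theorem skorokhod_reflection_properties
    (u : ℝ → ℝ) (x₀ : ℝ) (hu : Continuous u) (hu0 : u 0 = x₀) (hx₀ : 0 ≤ x₀)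
    (v x : ℝ → ℝ)
    (hv : ∀ t, v t = sSup ((fun s => max (-u s) 0) '' Icc 0 t))
    (hx : ∀ t, x t = u t + v t) :
    (∀ t, 0 ≤ t → 0 ≤ x t) ∧
    v 0 = 0 ∧
    (∀ t₁ t₂, 0 ≤ t₁ → t₁ ≤ t₂ → v t₁ ≤ v t₂) ∧
    (∀ t₁ t₂, 0 ≤ t₁ → t₁ < t₂ → v t₁ < v t₂ → ∃ s ∈ Icc t₁ t₂, x s = 0) := by
  set f : ℝ → ℝ := fun s => max (-u s) 0 with hf
  have hfc : Continuous f := (hu.neg).max continuous_const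
  have hbdd : ∀ t : ℝ, BddAbove (f '' Icc 0 t) := fun t =>
    (isCompact_Icc.image hfc).bddAbove
  -- f t ≤ v t for 0 ≤ t
  have hle : ∀ t s : ℝ, 0 ≤ s → s ≤ t → f s ≤ v t := by
    intro t s hs hst
    rw [hv t]
    exact le_csSup (hbdd t) ⟨s, ⟨hs, hst⟩, rfl⟩
  have hmono : ∀ t₁ t₂ : ℝ, 0 ≤ t₁ → t₁ ≤ t₂ → v t₁ ≤ v t₂ := by
    intro t₁ t₂ h1 h12
    rw [hv t₁, hv t₂]
    exact csSup_le_csSup (hbdd t₂) ((nonempty_Icc.2 h1).image f)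
      (image_mono (Icc_subset_Icc le_rfl h12))
  have hv0 : v 0 = 0 := by
    rw [hv 0]
    have : f '' Icc (0:ℝ) 0 = {0} := by
      rw [Icc_self, image_singleton]
      simp [hf, hu0, max_eq_right (neg_nonpos_of_nonneg hx₀)]
    rw [this, csSup_singleton]
  refine ⟨?_, hv0, hmono, ?_⟩
  · intro t ht
    have := hle t t ht le_rfl
    have h2 : -u t ≤ f t := le_max_left _ _
    rw [hx t]; linarith
  · intro t₁ t₂ h1 h12 hvv
    have h2 : (0:ℝ) ≤ t₂ := le_trans h1 h12.le
    obtain ⟨s, hs, hmax⟩ := isCompact_Icc.exists_sSup_image_eq (nonempty_Icc.2 h2)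
      hfc.continuousOn
    have hsv : f s = v t₂ := by rw [hv t₂, hmax]
    have hs1 : t₁ < s := by
      by_contra h
      push_neg at h
      have h3 := hle t₁ s hs.1 h
      rw [hsv] at h3
      linarith
    -- v s = v t₂ since f s ≤ v s ≤ v t₂ = f s
    have hvs : v s = v t₂ :=
      le_antisymm (hmono s t₂ hs.1 hs.2) (hsv ▸ hle s s hs.1 le_rfl)
    have hfpos : 0 < f s := by rw [hsv]; linarith [hmono t₁ t₂ h1 h12.le,
      (hv t₁ ▸ le_csSup (hbdd t₁) ⟨t₁, ⟨h1, le_rfl⟩, rfl⟩ : f t₁ ≤ v t₁), le_max_right (-u t₁) 0]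
    have hfs : f s = -u s := by
      rcases max_cases (-u s) 0 with ⟨h, _⟩ | ⟨h, _⟩
      · exact h
      · rw [hf] at hfpos; simp only at hfpos; linarith [hfpos.trans_eq h]
    refine ⟨s, ⟨hs1.le, hs.2⟩, ?_⟩
    rw [hx s, hvs, ← hsv, hfs]; ring
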